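/- (Upper estimate) For any probability distribution ρ on spanning trees of G with edge-appearance probabilities ρ_e = P_{T∼ρ}(e∈T) all strictly positive, U_ρ(θ) := Σ_T ρ^T Φ(Π^T_ρ(θ)) ≥ Φ(θ), where Π^T_ρ(θ)_e = 1(e∈T)·θ_e/ρ_e. -/

import Mathlib

open scoped Classical

/-- The log-partition function of a pairwise graphical model on the graph `G`. -/
noncomputable def logPartitionFn {V X : Type*} [Fintype V] [DecidableEq V] [Fintype X]
    (G : SimpleGraph V) [DecidableRel G.Adj]
    (ψ : Sym2 V → (V → X) → ℝ) (θ : Sym2 V → ℝ) : ℝ :=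
  Real.log (∑ x : V → X, Real.exp (∑ e ∈ G.edgeFinset, θ e * ψ e x))

/-- Jensen's inequality for the log-sum-exp function: `logsumexp` of a convex
combination is at most the convex combination of `logsumexp`s. -/
lemma logsumexp_jensen {ι κ : Type*} [Fintype ι] [Fintype κ] [Nonempty κ]
    (w : ι → ℝ) (hw : ∀ i, 0 ≤ w i) (hw1 : ∑ i, w i = 1) (a : ι → κ → ℝ) :
    Real.log (∑ x : κ, Real.exp (∑ i, w i * a i x))
      ≤ ∑ i, w i * Real.log (∑ x : κ, Real.exp (a i x)) := by
  set S : ι → ℝ := fun i => ∑ x : κ, Real.exp (a i x) with hS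
  have hSpos : ∀ i, 0 < S i := fun i =>
    Finset.sum_pos (fun x _ => Real.exp_pos _) Finset.univ_nonempty
  have key : ∀ x : κ, Real.exp (∑ i, w i * a i x)
      ≤ (∏ i, S i ^ w i) * ∑ i, w i * (Real.exp (a i x) / S i) := by
    intro x
    have h1 : Real.exp (∑ i, w i * a i x)
        = (∏ i, S i ^ w i) * ∏ i, (Real.exp (a i x) / S i) ^ w i := by
      rw [← Finset.prod_mul_distrib, Real.exp_sum]
      refine Finset.prod_congr rfl fun i _ => ?_
      rw [← Real.mul_rpow (hSpos i).le (by positivity),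
        mul_div_cancel₀ _ (hSpos i).ne',
        Real.rpow_def_of_pos (Real.exp_pos _), Real.log_exp, mul_comm]
    rw [h1]
    refine mul_le_mul_of_nonneg_left ?_ (by positivity)
    exact Real.geom_mean_le_arith_mean_weighted _ _ _ (fun i _ => hw i) hw1
      (fun i _ => by positivity)
  have h2 : (∑ x : κ, Real.exp (∑ i, w i * a i x)) ≤ ∏ i, S i ^ w i := by
    calc (∑ x : κ, Real.exp (∑ i, w i * a i x))
        ≤ ∑ x : κ, (∏ i, S i ^ w i) * ∑ i, w i * (Real.exp (a i x) / S i) :=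
          Finset.sum_le_sum fun x _ => key x
      _ = (∏ i, S i ^ w i) * ∑ x : κ, ∑ i, w i * (Real.exp (a i x) / S i) := by
          rw [Finset.mul_sum]
      _ = ∏ i, S i ^ w i := by
          rw [Finset.sum_comm]
          have : ∀ i : ι, ∑ x : κ, w i * (Real.exp (a i x) / S i) = w i := by
            intro i
            rw [← Finset.mul_sum]
            have : ∑ x : κ, Real.exp (a i x) / S i = 1 := by
              rw [← Finset.sum_div, div_self (hSpos i).ne']
            rw [this, mul_one]
          rw [Finset.sum_congr rfl fun i _ => this i, hw1, mul_one]
  calc Real.log (∑ x : κ, Real.exp (∑ i, w i * a i x))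
      ≤ Real.log (∏ i, S i ^ w i) :=
        Real.log_le_log (Finset.sum_pos (fun x _ => Real.exp_pos _) Finset.univ_nonempty) h2
    _ = ∑ i, w i * Real.log (S i) := by
        rw [Real.log_prod fun i _ => (Real.rpow_pos_of_pos (hSpos i) _).ne']
        exact Finset.sum_congr rfl fun i _ => Real.log_rpow (hSpos i) _

/-- Upper estimate: for any probability distribution `ρ` on spanning trees of `G`
with all edge-appearance probabilities `ρ_e` strictly positive,
`Φ(θ) ≤ U_ρ(θ) = Σ_T ρ^T Φ(Π^T_ρ(θ))`, where `Π^T_ρ(θ)_e = 1(e∈T)·θ_e/ρ_e`. -/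
theorem trw_upper_estimate
    {V X : Type*} [Fintype V] [DecidableEq V] [Fintype X] [Nonempty X]
    (G : SimpleGraph V) [DecidableRel G.Adj] (hG : G.Connected)
    (ψ : Sym2 V → (V → X) → ℝ)
    (hpair : ∀ e ∈ G.edgeSet, ∀ x y : V → X, (∀ v ∈ e, x v = y v) → ψ e x = ψ e y)
    (θ : Sym2 V → ℝ) (hθ : ∀ e, 0 ≤ θ e)
    {ι : Type*} [Fintype ι] (Tr : ι → SimpleGraph V)
    (hsub : ∀ i, Tr i ≤ G) (htree : ∀ i, (Tr i).IsTree)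
    (ρ : ι → ℝ) (hρ0 : ∀ i, 0 ≤ ρ i) (hρ1 : ∑ i, ρ i = 1)
    (hpos : ∀ e ∈ G.edgeFinset,
      0 < ∑ i, ρ i * (if e ∈ (Tr i).edgeSet then (1 : ℝ) else 0)) :
    logPartitionFn G ψ θ
      ≤ ∑ i, ρ i * logPartitionFn G ψ (fun e =>
          if e ∈ (Tr i).edgeSet then
            θ e / (∑ j, ρ j * (if e ∈ (Tr j).edgeSet then (1 : ℝ) else 0))
          else 0) := by
  set θ' : ι → Sym2 V → ℝ := fun i e =>
    if e ∈ (Tr i).edgeSet then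
      θ e / (∑ j, ρ j * (if e ∈ (Tr j).edgeSet then (1 : ℝ) else 0))
    else 0 with hθ'
  have hedge : ∀ e ∈ G.edgeFinset, ∑ i, ρ i * θ' i e = θ e := by
    intro e he
    have hpe := hpos e he
    have : ∀ i, ρ i * θ' i e
        = (ρ i * (if e ∈ (Tr i).edgeSet then (1 : ℝ) else 0))
          * (θ e / (∑ j, ρ j * (if e ∈ (Tr j).edgeSet then (1 : ℝ) else 0))) := by
      intro i
      simp only [hθ']
      split <;> ring
    rw [Finset.sum_congr rfl fun i _ => this i, ← Finset.sum_mul,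
      mul_div_cancel₀ _ hpe.ne']
  unfold logPartitionFn
  have hmain := logsumexp_jensen (κ := V → X) ρ hρ0 hρ1
    (fun i x => ∑ e ∈ G.edgeFinset, θ' i e * ψ e x)
  have hrw : ∀ x : V → X,
      (∑ i, ρ i * ∑ e ∈ G.edgeFinset, θ' i e * ψ e x)
        = ∑ e ∈ G.edgeFinset, θ e * ψ e x := by
    intro x
    calc (∑ i, ρ i * ∑ e ∈ G.edgeFinset, θ' i e * ψ e x)
        = ∑ i, ∑ e ∈ G.edgeFinset, ρ i * θ' i e * ψ e x := by
          refine Finset.sum_congr rfl fun i _ => ?_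
          rw [Finset.mul_sum]; exact Finset.sum_congr rfl fun e _ => by ring
      _ = ∑ e ∈ G.edgeFinset, ∑ i, ρ i * θ' i e * ψ e x := Finset.sum_comm
      _ = ∑ e ∈ G.edgeFinset, θ e * ψ e x := by
          refine Finset.sum_congr rfl fun e he => ?_
          rw [← Finset.sum_mul, hedge e he]
  calc Real.log (∑ x : V → X, Real.exp (∑ e ∈ G.edgeFinset, θ e * ψ e x))
      = Real.log (∑ x : V → X, Real.exp (∑ i, ρ i * ∑ e ∈ G.edgeFinset, θ' i e * ψ e x)) := by
        exact congrArg Real.log (Finset.sum_congr rfl fun x _ => by rw [← hrw x])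
    _ ≤ ∑ i, ρ i * Real.log (∑ x : V → X, Real.exp (∑ e ∈ G.edgeFinset, θ' i e * ψ e x)) :=
        hmain
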